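/- arXiv:1503.08127 — 5 statements merged into one kernel-verified Lean document; each statement's English description precedes it below -/
import Mathlib

section
/- If f and g are formal power series with integer coefficients, each primitive (i.e., the ideal generated by its coefficients is the unit ideal of ℤ), then the product f·g is also a primitive power series. -/
/-- A power series with integer coefficients is *primitive* if the ideal of `ℤ`
generated by its coefficients is the unit ideal. -/
def PowerSeries.IsPrimitive (f : PowerSeries ℤ) : Prop :=
  Ideal.span (Set.range fun n => PowerSeries.coeff n f) = ⊤

/-- Gauss' lemma for power series: the product of primitive power series is primitive. -/
theorem PowerSeries.IsPrimitive.mul {f g : PowerSeries ℤ}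
    (hf : f.IsPrimitive) (hg : g.IsPrimitive) : (f * g).IsPrimitive := by
  by_contra h
  obtain ⟨M, hM, hle⟩ := Ideal.exists_le_maximal _ h
  haveI := hM.isPrime
  set φ := PowerSeries.map (Ideal.Quotient.mk M) with hφ
  have hzero : ∀ q : PowerSeries ℤ, (∀ n, PowerSeries.coeff n q ∈ M) ↔ φ q = 0 := by
    intro q
    constructor
    · intro hq
      ext n
      simp [hφ, PowerSeries.coeff_map, Ideal.Quotient.eq_zero_iff_mem.mpr (hq n)]
    · intro hq n
      have := congrArg (PowerSeries.coeff n) hq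
      exact Ideal.Quotient.eq_zero_iff_mem.mp (by simpa [hφ, PowerSeries.coeff_map] using this)
  have hfg : φ (f * g) = 0 :=
    (hzero _).mp fun n => hle (Ideal.subset_span ⟨n, rfl⟩)
  rw [map_mul] at hfg
  rcases mul_eq_zero.mp hfg with h0 | h0
  · have hsub : Ideal.span (Set.range fun n => PowerSeries.coeff n f) ≤ M :=
      Ideal.span_le.mpr (by rintro x ⟨n, rfl⟩; exact (hzero f).mpr h0 n)
    exact hM.ne_top (top_le_iff.mp (hf ▸ hsub))
  · have hsub : Ideal.span (Set.range fun n => PowerSeries.coeff n g) ≤ M :=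
      Ideal.span_le.mpr (by rintro x ⟨n, rfl⟩; exact (hzero g).mpr h0 n)
    exact hM.ne_top (top_le_iff.mp (hg ▸ hsub))
end

section
/- Let f, g ∈ ℚ[[x]] be power series with constant term 1, each having bounded denominator (i.e., there exist nonzero integers a, b with a·f ∈ ℤ[[x]] and b·g ∈ ℤ[[x]]). If f·g ∈ ℤ[[x]], then f ∈ ℤ[[x]] and g ∈ ℤ[[x]]. -/
/-- A power series over `ℚ` has *bounded denominator* if some nonzero integer
multiple of it has integer coefficients. -/
def PowerSeries.HasBoundedDenominator (f : PowerSeries ℚ) : Prop :=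
  ∃ d : ℤ, d ≠ 0 ∧ ∀ n : ℕ, ∃ z : ℤ, (d : ℚ) * PowerSeries.coeff n f = (z : ℚ)

/-- A power series over `ℚ` has integer coefficients. -/
def PowerSeries.HasIntegerCoeffs (f : PowerSeries ℚ) : Prop :=
  ∀ n : ℕ, ∃ z : ℤ, PowerSeries.coeff n f = (z : ℚ)

open PowerSeries in
/-- Lift a `ℚ`-power series with integer coefficients to `ℤ⟦X⟧`. -/
lemma exists_int_lift (h : PowerSeries ℚ)
    (hh : ∀ k : ℕ, ∃ z : ℤ, PowerSeries.coeff k h = (z : ℚ)) :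
    ∃ H : PowerSeries ℤ, PowerSeries.map (Int.castRingHom ℚ) H = h := by
  classical
  refine ⟨PowerSeries.mk fun k => (hh k).choose, ?_⟩
  ext k
  simp only [coeff_map, coeff_mk, Int.coe_castRingHom]
  exact ((hh k).choose_spec).symm

open PowerSeries in
/-- If the reduction of `F` mod `p` vanishes, where the coefficients of `F` are
`a` times those of `f`, then `a / p` also clears denominators of `f`. -/
lemma step_lemma (f : PowerSeries ℚ) (a p : ℕ) (hp : p.Prime)
    (F : PowerSeries ℤ)
    (hF : ∀ k, ((PowerSeries.coeff k F : ℤ) : ℚ) = (a : ℚ) * PowerSeries.coeff k f)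
    (hFp : PowerSeries.map (Int.castRingHom (ZMod p)) F = 0)
    (hpa : p ∣ a) :
    ∀ k, ∃ z : ℤ, ((a / p : ℕ) : ℚ) * PowerSeries.coeff k f = (z : ℚ) := by
  intro k
  have hdvd : (p : ℤ) ∣ PowerSeries.coeff k F := by
    have := congrArg (PowerSeries.coeff k) hFp
    simp only [coeff_map, map_zero, Int.coe_castRingHom] at this
    exact_mod_cast (ZMod.intCast_zmod_eq_zero_iff_dvd _ p).mp this
  obtain ⟨w, hw⟩ := hdvd
  refine ⟨w, ?_⟩
  obtain ⟨m, hm⟩ := hpa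
  have hm' : a / p = m := by rw [hm]; exact Nat.mul_div_cancel_left m hp.pos
  have hcast : ((p : ℚ)) * ((m : ℚ) * PowerSeries.coeff k f) = (p : ℚ) * (w : ℚ) := by
    have h1 := hF k
    rw [hw] at h1
    push_cast at h1 ⊢
    rw [hm] at h1
    push_cast at h1
    linarith
  have hp0 : (p : ℚ) ≠ 0 := by exact_mod_cast hp.ne_zero
  rw [hm']
  exact mul_left_cancel₀ hp0 hcast

/-- If `f, g ∈ ℚ[[x]]` have constant term `1` and bounded denominator, and `f·g` has
integer coefficients, then both `f` and `g` have integer coefficients. -/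
theorem integerCoeffs_of_mul_integerCoeffs (f g : PowerSeries ℚ)
    (hf1 : PowerSeries.constantCoeff f = 1) (hg1 : PowerSeries.constantCoeff g = 1)
    (hf : f.HasBoundedDenominator) (hg : g.HasBoundedDenominator)
    (hfg : (f * g).HasIntegerCoeffs) :
    f.HasIntegerCoeffs ∧ g.HasIntegerCoeffs := by
  classical
  -- the property of clearing denominators
  have exP : ∀ (h : PowerSeries ℚ), h.HasBoundedDenominator →
      ∃ n : ℕ, 0 < n ∧ ∀ k, ∃ z : ℤ, (n : ℚ) * PowerSeries.coeff k h = (z : ℚ) := by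
    rintro h ⟨d, hd, hdh⟩
    refine ⟨d.natAbs, Int.natAbs_pos.mpr hd, fun k => ?_⟩
    obtain ⟨z, hz⟩ := hdh k
    rcases le_or_gt 0 d with hsg | hsg
    · refine ⟨z, ?_⟩
      rw [Nat.cast_natAbs, Int.cast_abs]
      rw [abs_of_nonneg (show (0:ℚ) ≤ (d:ℚ) by exact_mod_cast hsg)]
      exact hz
    · refine ⟨-z, ?_⟩
      rw [Nat.cast_natAbs, Int.cast_abs]
      rw [abs_of_neg (show (d:ℚ) < 0 by exact_mod_cast hsg)]
      push_cast
      linarith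
  have hPf := exP f hf
  have hPg := exP g hg
  set a := Nat.find hPf with ha_def
  set b := Nat.find hPg with hb_def
  obtain ⟨ha0, haf⟩ := Nat.find_spec hPf
  obtain ⟨hb0, hbg⟩ := Nat.find_spec hPg
  -- integer lifts
  obtain ⟨F, hF⟩ := exists_int_lift (PowerSeries.C (a : ℚ) * f) (by
    intro k
    obtain ⟨z, hz⟩ := haf k
    exact ⟨z, by rw [PowerSeries.coeff_C_mul]; exact hz⟩)
  obtain ⟨G, hG⟩ := exists_int_lift (PowerSeries.C (b : ℚ) * g) (by
    intro k
    obtain ⟨z, hz⟩ := hbg k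
    exact ⟨z, by rw [PowerSeries.coeff_C_mul]; exact hz⟩)
  obtain ⟨H, hH⟩ := exists_int_lift (f * g) hfg
  have hFc : ∀ k, ((PowerSeries.coeff k F : ℤ) : ℚ) = (a : ℚ) * PowerSeries.coeff k f := by
    intro k
    have := congrArg (PowerSeries.coeff k) hF
    simp only [PowerSeries.coeff_map, Int.coe_castRingHom, PowerSeries.coeff_C_mul] at this
    exact this
  have hGc : ∀ k, ((PowerSeries.coeff k G : ℤ) : ℚ) = (b : ℚ) * PowerSeries.coeff k g := by
    intro k
    have := congrArg (PowerSeries.coeff k) hG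
    simp only [PowerSeries.coeff_map, Int.coe_castRingHom, PowerSeries.coeff_C_mul] at this
    exact this
  -- F * G = (a*b) • H in ℤ⟦X⟧
  have hFG : F * G = PowerSeries.C ((a : ℤ) * b) * H := by
    have hinj : Function.Injective (PowerSeries.map (Int.castRingHom ℚ)) := by
      intro x y hxy
      ext k
      have := congrArg (PowerSeries.coeff k) hxy
      simp only [PowerSeries.coeff_map, Int.coe_castRingHom] at this
      exact_mod_cast this
    apply hinj
    rw [map_mul, map_mul, hF, hG, hH]
    rw [PowerSeries.map_C]
    simp only [Int.coe_castRingHom, Int.cast_mul, Int.cast_natCast, map_mul]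
    ring
  -- No prime divides a * b
  have hnop : ∀ p : ℕ, p.Prime → ¬ p ∣ a * b := by
    intro p hp hpab
    haveI : Fact p.Prime := ⟨hp⟩
    -- reduce mod p
    have hred : (PowerSeries.map (Int.castRingHom (ZMod p)) F) *
        (PowerSeries.map (Int.castRingHom (ZMod p)) G) = 0 := by
      rw [← map_mul, hFG, map_mul, PowerSeries.map_C]
      have : ((Int.castRingHom (ZMod p)) ((a : ℤ) * b)) = 0 := by
        simp only [Int.coe_castRingHom]
        exact_mod_cast (ZMod.natCast_eq_zero_iff _ p).mpr hpab
      rw [this, map_zero, zero_mul]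
    rcases mul_eq_zero.mp hred with h0 | h0
    · -- p divides all coefficients of F; in particular p ∣ a (constant coeff)
      have hpa : p ∣ a := by
        have hF0 : ((PowerSeries.coeff 0 F : ℤ) : ℚ) = (a : ℚ) := by
          rw [hFc 0]
          rw [← PowerSeries.coeff_zero_eq_constantCoeff_apply] at hf1
          rw [hf1, mul_one]
        have hF0' : PowerSeries.coeff 0 F = (a : ℤ) := by exact_mod_cast hF0
        have := congrArg (PowerSeries.coeff 0) h0
        simp only [PowerSeries.coeff_map, map_zero, Int.coe_castRingHom, hF0'] at this
        exact_mod_cast (ZMod.intCast_zmod_eq_zero_iff_dvd _ p).mp this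
      have hstep := step_lemma f a p hp F hFc h0 hpa
      have hlt : a / p < a := Nat.div_lt_self ha0 hp.one_lt
      have hpos : 0 < a / p := Nat.div_pos (Nat.le_of_dvd ha0 hpa) hp.pos
      exact Nat.find_min hPf hlt ⟨hpos, hstep⟩
    · have hpb : p ∣ b := by
        have hG0 : ((PowerSeries.coeff 0 G : ℤ) : ℚ) = (b : ℚ) := by
          rw [hGc 0]
          rw [← PowerSeries.coeff_zero_eq_constantCoeff_apply] at hg1
          rw [hg1, mul_one]
        have hG0' : PowerSeries.coeff 0 G = (b : ℤ) := by exact_mod_cast hG0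
        have := congrArg (PowerSeries.coeff 0) h0
        simp only [PowerSeries.coeff_map, map_zero, Int.coe_castRingHom, hG0'] at this
        exact_mod_cast (ZMod.intCast_zmod_eq_zero_iff_dvd _ p).mp this
      have hstep := step_lemma g b p hp G hGc h0 hpb
      have hlt : b / p < b := Nat.div_lt_self hb0 hp.one_lt
      have hpos : 0 < b / p := Nat.div_pos (Nat.le_of_dvd hb0 hpb) hp.pos
      exact Nat.find_min hPg hlt ⟨hpos, hstep⟩
  have hab1 : a * b = 1 := by
    by_contra hne
    obtain ⟨p, hp, hpd⟩ := Nat.exists_prime_and_dvd hne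
    exact hnop p hp hpd
  have ha1 : a = 1 := Nat.dvd_one.mp ⟨b, hab1.symm⟩
  have hb1 : b = 1 := Nat.dvd_one.mp ⟨a, by rw [mul_comm]; exact hab1.symm⟩
  have ha1' : ((Nat.find hPf : ℕ) : ℚ) = 1 := by rw [← ha_def, ha1]; norm_num
  have hb1' : ((Nat.find hPg : ℕ) : ℚ) = 1 := by rw [← hb_def, hb1]; norm_num
  constructor
  · intro k
    obtain ⟨z, hz⟩ := haf k
    rw [ha1', one_mul] at hz
    exact ⟨z, hz⟩
  · intro k
    obtain ⟨z, hz⟩ := hbg k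
    rw [hb1', one_mul] at hz
    exact ⟨z, hz⟩
end

section
/- For B, C in a field k of characteristic 0 with D := B³·(C⁴ − 8BC² − 3C³ + 16B² − 20BC + 3C² + B − C) ≠ 0, the Weierstrass equation Y² + (1−C)XY − BY = X³ − BX² defines an elliptic curve E over k, and the point P = (0,0) lies on E and does not have order 1, 2, or 3. -/
/-- The Tate normal form curve `Y² + (1−C)XY − BY = X³ − BX²` over a field `k`. -/
def tateCurve {k : Type*} [CommRing k] (B C : k) : WeierstrassCurve k :=
  { a₁ := 1 - C, a₂ := -B, a₃ := -B, a₄ := 0, a₆ := 0 }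

theorem tateCurve_Δ {k : Type*} [CommRing k] (B C : k) :
    (tateCurve B C).Δ = B ^ 3 * (C ^ 4 - 8 * B * C ^ 2 - 3 * C ^ 3 + 16 * B ^ 2 - 20 * B * C
      + 3 * C ^ 2 + B - C) := by
  simp only [WeierstrassCurve.Δ, WeierstrassCurve.b₂, WeierstrassCurve.b₄, WeierstrassCurve.b₆,
    WeierstrassCurve.b₈, tateCurve]
  ring

open Classical in
/-- If `D = B³·(C⁴ − 8BC² − 3C³ + 16B² − 20BC + 3C² + B − C) ≠ 0`, then the Tate normal
form defines an elliptic curve (its discriminant is nonzero), the point `P = (0,0)` lies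
on the curve, and `P` does not have order `1`, `2` or `3`. -/
theorem tateCurve_elliptic_and_point {k : Type*} [Field k] [CharZero k] (B C : k)
    (hD : B ^ 3 * (C ^ 4 - 8 * B * C ^ 2 - 3 * C ^ 3 + 16 * B ^ 2 - 20 * B * C
      + 3 * C ^ 2 + B - C) ≠ 0) :
    (tateCurve B C).Δ ≠ 0 ∧
      ∃ h : (tateCurve B C).toAffine.Nonsingular 0 0,
        addOrderOf (WeierstrassCurve.Affine.Point.some _ _ h) ≠ 1 ∧
        addOrderOf (WeierstrassCurve.Affine.Point.some _ _ h) ≠ 2 ∧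
        addOrderOf (WeierstrassCurve.Affine.Point.some _ _ h) ≠ 3 := by
  have hΔ : (tateCurve B C).Δ ≠ 0 := by rw [tateCurve_Δ]; exact hD
  have hB : B ≠ 0 := fun h => hD (by rw [h]; ring)
  have heq : (tateCurve B C).toAffine.Equation 0 0 := by
    rw [WeierstrassCurve.Affine.equation_iff]; simp [tateCurve]
  have h : (tateCurve B C).toAffine.Nonsingular 0 0 :=
    (WeierstrassCurve.Affine.equation_iff_nonsingular_of_Δ_ne_zero hΔ).mp heq
  refine ⟨hΔ, h, ?_, ?_, ?_⟩
  · intro h1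
    have := addOrderOf_nsmul_eq_zero (WeierstrassCurve.Affine.Point.some _ _ h)
    rw [h1, one_nsmul] at this
    exact WeierstrassCurve.Affine.Point.some_ne_zero h this
  · intro h2
    have hne : (0 : k) ≠ (tateCurve B C).toAffine.negY 0 0 := by
      simp [WeierstrassCurve.Affine.negY, tateCurve, hB.symm]
    have := addOrderOf_nsmul_eq_zero (WeierstrassCurve.Affine.Point.some _ _ h)
    rw [h2, two_nsmul, WeierstrassCurve.Affine.Point.add_self_of_Y_ne hne] at this
    exact WeierstrassCurve.Affine.Point.some_ne_zero _ this
  · intro h3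
    have hne : (0 : k) ≠ (tateCurve B C).toAffine.negY 0 0 := by
      simp [WeierstrassCurve.Affine.negY, tateCurve, hB.symm]
    have key := addOrderOf_nsmul_eq_zero (WeierstrassCurve.Affine.Point.some _ _ h)
    rw [h3, show (3 : ℕ) = 2 + 1 by rfl, add_nsmul, two_nsmul, one_nsmul,
      WeierstrassCurve.Affine.Point.add_self_of_Y_ne hne] at key
    -- x-coordinate of 2P is B ≠ 0 = x-coordinate of P
    have hx : (tateCurve B C).toAffine.addX 0 0 ((tateCurve B C).toAffine.slope 0 0 0 0) ≠ 0 := by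
      rw [WeierstrassCurve.Affine.slope_of_Y_ne rfl hne]
      simpa [WeierstrassCurve.Affine.addX, WeierstrassCurve.Affine.negY, tateCurve] using hB
    rw [WeierstrassCurve.Affine.Point.add_of_X_ne hx] at key
    exact WeierstrassCurve.Affine.Point.some_ne_zero _ key
end

section
/- Fix an integer N ≥ 2 and set m = ⌊N/2⌋. For k = 1,…,m define the formal power series g_k ∈ ℤ[[x]] by g_k = (1−x^k)·∏_{n≥1}(1−x^{nN+k})(1−x^{nN−k}). Then the g_k are multiplicatively independent: if ∏_{k=1}^m g_k^{e(k)} = 1 in ℚ((x)) for integers e(k), then all e(k) = 0. -/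
open Finset PowerSeries

/-- The formal power series `g_k = (1−x^k)·∏_{n≥1}(1−x^{nN+k})(1−x^{nN−k}) ∈ ℤ[[x]]`.
Since for `1 ≤ k < N` the factors with `n > j` do not affect the coefficient of `x^j`,
the infinite product is defined coefficient-wise by a finite truncated product. -/
noncomputable def siegelSeries (N k : ℕ) : PowerSeries ℤ :=
  PowerSeries.mk fun j =>
    PowerSeries.coeff (R := ℤ) j
      ((1 - X ^ k) * ∏ n ∈ Icc 1 (j + 1), ((1 - X ^ (n * N + k)) * (1 - X ^ (n * N - k))))

/-- The image of `g_k` in the field of formal Laurent series `ℚ((x))`. -/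
noncomputable def siegelSeriesL (N k : ℕ) : LaurentSeries ℚ :=
  HahnSeries.ofPowerSeries ℤ ℚ (PowerSeries.map (Int.castRingHom ℚ) (siegelSeries N k))

/- ### Auxiliary lemmas -/

lemma coeff_mul_one_sub_X_pow (P : PowerSeries ℤ) {j s : ℕ} (h : j < s) :
    coeff (R := ℤ) j (P * (1 - X ^ s)) = coeff (R := ℤ) j P := by
  rw [mul_sub, mul_one, map_sub, coeff_mul_X_pow', if_neg (by omega), sub_zero]

lemma coeff_mul_prod_one_sub (P : PowerSeries ℤ) (S : Finset ℕ) (f : ℕ → ℕ) (j : ℕ)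
    (h : ∀ n ∈ S, j < f n) :
    coeff (R := ℤ) j (P * ∏ n ∈ S, (1 - X ^ f n)) = coeff (R := ℤ) j P := by
  classical
  induction S using Finset.induction_on with
  | empty => simp
  | @insert a S ha ih =>
    rw [Finset.prod_insert ha]
    have : P * ((1 - X ^ f a) * ∏ n ∈ S, (1 - X ^ f n)) =
        (P * ∏ n ∈ S, (1 - X ^ f n)) * (1 - X ^ f a) := by ring
    rw [this, coeff_mul_one_sub_X_pow _ (h a (Finset.mem_insert_self a S)),
      ih (fun n hn => h n (Finset.mem_insert_of_mem hn))]

lemma coeff_siegel_low (N k j : ℕ) (hj : j < N - k) :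
    coeff (R := ℤ) j (siegelSeries N k) = coeff (R := ℤ) j (1 - X ^ k) := by
  rw [siegelSeries, coeff_mk, Finset.prod_mul_distrib, ← mul_assoc,
    coeff_mul_prod_one_sub _ _ _ _ (fun n hn => by
      rw [Finset.mem_Icc] at hn
      have : 1 * N ≤ n * N := Nat.mul_le_mul_right N hn.1
      omega),
    coeff_mul_prod_one_sub _ _ _ _ (fun n hn => by
      rw [Finset.mem_Icc] at hn
      have : 1 * N ≤ n * N := Nat.mul_le_mul_right N hn.1
      omega)]

lemma coeff_siegel_half (N k : ℕ) (hk : 1 ≤ k) (hN : 2 * k = N) :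
    coeff (R := ℤ) k (siegelSeries N k) = -2 := by
  classical
  rw [siegelSeries, coeff_mk]
  have h1 : Icc 1 (k + 1) = insert 1 (Icc 2 (k + 1)) := by
    ext n; simp only [Finset.mem_Icc, Finset.mem_insert]; omega
  rw [h1, Finset.prod_insert (by simp), Finset.prod_mul_distrib]
  have hNk : 1 * N - k = k := by omega
  have hNk' : 1 * N + k = N + k := by omega
  rw [hNk, hNk']
  have rearr : (1 - X ^ k : PowerSeries ℤ) * ((1 - X ^ (N + k)) * (1 - X ^ k) *
      ((∏ n ∈ Icc 2 (k + 1), (1 - X ^ (n * N + k))) *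
        ∏ n ∈ Icc 2 (k + 1), (1 - X ^ (n * N - k)))) =
      (((1 - X ^ k) * (1 - X ^ k) * (∏ n ∈ Icc 2 (k + 1), (1 - X ^ (n * N + k))) *
        ∏ n ∈ Icc 2 (k + 1), (1 - X ^ (n * N - k)))) * (1 - X ^ (N + k)) := by ring
  rw [rearr, coeff_mul_one_sub_X_pow _ (by omega),
    coeff_mul_prod_one_sub _ _ _ _ (fun n hn => by
      rw [Finset.mem_Icc] at hn
      have : 2 * N ≤ n * N := Nat.mul_le_mul_right N hn.1
      omega),
    coeff_mul_prod_one_sub _ _ _ _ (fun n hn => by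
      rw [Finset.mem_Icc] at hn
      have : 2 * N ≤ n * N := Nat.mul_le_mul_right N hn.1
      omega)]
  have expand : (1 - X ^ k : PowerSeries ℤ) * (1 - X ^ k) =
      1 - (X ^ k + X ^ k) + X ^ (k + k) := by rw [pow_add]; ring
  have hne1 : k ≠ 0 := by omega
  have hne2 : k ≠ k + k := by omega
  rw [expand, map_add, map_sub, map_add]
  simp only [coeff_one, coeff_X_pow, if_neg hne1, if_neg hne2, if_pos rfl]
  norm_num

lemma constantCoeff_siegel (N k : ℕ) (hk : 1 ≤ k) (hkN : k < N) :
    constantCoeff (R := ℤ) (siegelSeries N k) = 1 := by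
  have h := coeff_siegel_low N k 0 (by omega)
  rw [← coeff_zero_eq_constantCoeff, h, map_sub, coeff_one, coeff_X_pow,
    if_pos rfl, if_neg (by omega), sub_zero]

lemma coeff_siegel_vanish (N k t : ℕ) (ht0 : 0 < t) (ht : t < k) (hkN : 2 * k ≤ N) :
    coeff (R := ℤ) t (siegelSeries N k) = 0 := by
  rw [coeff_siegel_low N k t (by omega), map_sub, coeff_one, coeff_X_pow,
    if_neg (by omega), if_neg (by omega), sub_zero]

/-- If `φ` has vanishing coefficients below `j` and `ψ` has zero constant term, then
`φ * ψ` has vanishing coefficient at every `t ≤ j`. -/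
lemma coeff_mul_vanish (φ ψ : PowerSeries ℚ) (t j : ℕ) (ht : t ≤ j)
    (hφ : ∀ p, p < j → coeff (R := ℚ) p φ = 0) (hψ : coeff (R := ℚ) 0 ψ = 0) :
    coeff (R := ℚ) t (φ * ψ) = 0 := by
  rw [coeff_mul]
  apply Finset.sum_eq_zero
  rintro ⟨p, q⟩ hpq
  rw [Finset.HasAntidiagonal.mem_antidiagonal] at hpq
  by_cases hq : q = 0
  · subst hq; rw [hψ, mul_zero]
  · rw [hφ p (by omega), zero_mul]

lemma coeff_prod_one_add {ι : Type*} (F : ι → PowerSeries ℚ) (j t : ℕ)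
    (ht0 : 0 < t) (htj : t ≤ j) :
    ∀ S : Finset ι, (∀ i ∈ S, constantCoeff (R := ℚ) (F i) = 1) →
      (∀ i ∈ S, ∀ p, 0 < p → p < j → coeff (R := ℚ) p (F i) = 0) →
      coeff (R := ℚ) t (∏ i ∈ S, F i) = ∑ i ∈ S, coeff (R := ℚ) t (F i) := by
  classical
  intro S
  induction S using Finset.induction_on with
  | empty => intro _ _; simp [coeff_one, ht0.ne']
  | @insert a S ha ih =>
    intro h0 hv
    rw [Finset.prod_insert ha, Finset.sum_insert ha]
    set P := ∏ i ∈ S, F i with hP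
    have hconst : constantCoeff (R := ℚ) P = 1 := by
      rw [hP, map_prod]
      exact Finset.prod_eq_one fun i hi => h0 i (Finset.mem_insert_of_mem hi)
    have decomp : F a * P = (F a - 1) * (P - 1) + (F a - 1) + P := by ring
    have hzero : coeff (R := ℚ) t ((F a - 1) * (P - 1)) = 0 := by
      apply coeff_mul_vanish _ _ t j htj
      · intro p hp
        rw [map_sub, coeff_one]
        rcases Nat.eq_zero_or_pos p with h | h
        · subst h
          rw [coeff_zero_eq_constantCoeff, h0 a (Finset.mem_insert_self a S), if_pos rfl,
            sub_self]
        · rw [hv a (Finset.mem_insert_self a S) p h hp, if_neg h.ne', sub_zero]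
      · rw [map_sub, coeff_zero_eq_constantCoeff, map_one, hconst, sub_self]
    rw [decomp, map_add, map_add, hzero, zero_add, map_sub, coeff_one, if_neg ht0.ne',
      sub_zero, ih (fun i hi => h0 i (Finset.mem_insert_of_mem hi))
        (fun i hi => hv i (Finset.mem_insert_of_mem hi))]

lemma coeff_pow_one_add (φ : PowerSeries ℚ) (j t a : ℕ) (ht0 : 0 < t) (htj : t ≤ j)
    (h0 : constantCoeff (R := ℚ) φ = 1) (hv : ∀ p, 0 < p → p < j → coeff (R := ℚ) p φ = 0) :
    coeff (R := ℚ) t (φ ^ a) = (a : ℚ) * coeff (R := ℚ) t φ := by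
  have := coeff_prod_one_add (fun _ : ℕ => φ) j t ht0 htj (Finset.range a)
    (fun _ _ => h0) (fun _ _ => hv)
  rw [Finset.prod_const, Finset.card_range, Finset.sum_const, Finset.card_range,
    nsmul_eq_mul] at this
  exact this

/-- The series `g_k`, `k = 1, …, m = ⌊N/2⌋`, are multiplicatively independent:
if `∏ g_k^{e(k)} = 1` in `ℚ((x))` for integers `e(k)`, then all `e(k) = 0`. -/
theorem siegelSeries_mul_independent (N : ℕ) (hN : 2 ≤ N) (m : ℕ) (hm : m = N / 2)
    (e : ℕ → ℤ) (h : ∏ k ∈ Icc 1 m, siegelSeriesL N k ^ e k = 1) :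
    ∀ k ∈ Icc 1 m, e k = 0 := by
  classical
  by_contra hcon
  push_neg at hcon
  obtain ⟨k', hk', hek'⟩ := hcon
  set T : Finset ℕ := (Icc 1 m).filter (fun k => e k ≠ 0) with hT
  have hTne : T.Nonempty := ⟨k', by rw [hT]; exact Finset.mem_filter.mpr ⟨hk', hek'⟩⟩
  set k₀ := T.min' hTne with hk₀def
  have hk₀T : k₀ ∈ T := Finset.min'_mem T hTne
  have hk₀mem : k₀ ∈ Icc 1 m := (Finset.mem_filter.mp hk₀T).1
  have hek₀ : e k₀ ≠ 0 := (Finset.mem_filter.mp hk₀T).2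
  have hk₀min : ∀ k ∈ Icc 1 m, k < k₀ → e k = 0 := by
    intro k hk hlt
    by_contra hne
    exact absurd (Finset.min'_le T k (Finset.mem_filter.mpr ⟨hk, hne⟩)) (by omega)
  rw [Finset.mem_Icc] at hk₀mem
  obtain ⟨hk₀1, hk₀m⟩ := hk₀mem
  -- basic facts about the series G k
  set G : ℕ → PowerSeries ℚ :=
    fun k => PowerSeries.map (Int.castRingHom ℚ) (siegelSeries N k) with hG
  have hGc : ∀ k, 1 ≤ k → k ≤ m → constantCoeff (R := ℚ) (G k) = 1 := by
    intro k h1 h2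
    rw [hG]
    have : constantCoeff (R := ℚ) (PowerSeries.map (Int.castRingHom ℚ) (siegelSeries N k)) =
        (Int.castRingHom ℚ) (constantCoeff (R := ℤ) (siegelSeries N k)) := by
      rw [← coeff_zero_eq_constantCoeff, coeff_map, coeff_zero_eq_constantCoeff]
    rw [this, constantCoeff_siegel N k h1 (by omega), map_one]
  have hGv : ∀ k, k ≤ m → ∀ p, 0 < p → p < k → coeff (R := ℚ) p (G k) = 0 := by
    intro k h2 p hp0 hpk
    rw [hG, coeff_map, coeff_siegel_vanish N k p hp0 hpk (by omega), map_zero]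
  -- the key coefficient c
  set c : ℚ := coeff (R := ℚ) k₀ (G k₀) with hc
  have hcval : c = -1 ∨ c = -2 := by
    rcases lt_or_eq_of_le (show 2 * k₀ ≤ N by omega) with hlt | heq
    · left
      rw [hc, hG, coeff_map, coeff_siegel_low N k₀ k₀ (by omega), map_sub, coeff_one,
        coeff_X_pow, if_neg (by omega), if_pos rfl]
      norm_num
    · right
      rw [hc, hG, coeff_map, coeff_siegel_half N k₀ hk₀1 heq]
      norm_num
  have hcne : c ≠ 0 := by rcases hcval with h' | h' <;> rw [h'] <;> norm_num
  -- nonzero images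
  have hOne : ∀ k, 1 ≤ k → k ≤ m →
      (HahnSeries.ofPowerSeries ℤ ℚ (G k) : LaurentSeries ℚ) ≠ 0 := by
    intro k h1 h2 h0
    have : G k = 0 := HahnSeries.ofPowerSeries_injective (by rw [h0, map_zero])
    have := hGc k h1 h2
    rw [‹G k = 0›, map_zero] at this
    exact zero_ne_one this
  -- split exponents
  set a : ℕ → ℕ := fun k => (e k).toNat with ha
  set b : ℕ → ℕ := fun k => (-(e k)).toNat with hb
  have hab : ∀ k, (e k) = (a k : ℤ) - (b k : ℤ) := by intro k; simp only [ha, hb]; omega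
  -- from h, deduce equality of the two power-series products
  have hprod : ∏ k ∈ Icc 1 m, G k ^ a k = ∏ k ∈ Icc 1 m, G k ^ b k := by
    apply HahnSeries.ofPowerSeries_injective (Γ := ℤ) (R := ℚ)
    rw [map_prod, map_prod]
    simp only [map_pow]
    have hA : (∏ k ∈ Icc 1 m, (HahnSeries.ofPowerSeries ℤ ℚ (G k)) ^ b k) ≠ 0 := by
      apply Finset.prod_ne_zero_iff.mpr
      intro k hk
      rw [Finset.mem_Icc] at hk
      exact pow_ne_zero _ (hOne k hk.1 hk.2)
    have key : (∏ k ∈ Icc 1 m, (HahnSeries.ofPowerSeries ℤ ℚ (G k)) ^ a k) /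
        (∏ k ∈ Icc 1 m, (HahnSeries.ofPowerSeries ℤ ℚ (G k)) ^ b k) = 1 := by
      rw [← Finset.prod_div_distrib, ← h]
      apply Finset.prod_congr rfl
      intro k hk
      rw [Finset.mem_Icc] at hk
      have hne := hOne k hk.1 hk.2
      have : siegelSeriesL N k = HahnSeries.ofPowerSeries ℤ ℚ (G k) := rfl
      rw [this, hab k, zpow_sub₀ hne, zpow_natCast, zpow_natCast]
    have := (div_eq_iff hA).mp key
    rw [one_mul] at this
    exact this
  -- compute the coefficient of x^k₀ on both sides
  have coeffcomp : ∀ f : ℕ → ℕ, (∀ k ∈ Icc 1 m, k < k₀ → f k = 0) →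
      coeff (R := ℚ) k₀ (∏ k ∈ Icc 1 m, G k ^ f k) = (f k₀ : ℚ) * c := by
    intro f hf
    have h0' : ∀ k ∈ Icc 1 m, constantCoeff (R := ℚ) (G k ^ f k) = 1 := by
      intro k hk
      rw [Finset.mem_Icc] at hk
      rw [map_pow, hGc k hk.1 hk.2, one_pow]
    have hv' : ∀ k ∈ Icc 1 m, ∀ p, 0 < p → p < k₀ → coeff (R := ℚ) p (G k ^ f k) = 0 := by
      intro k hk p hp0 hpk₀
      rw [Finset.mem_Icc] at hk
      rcases lt_or_ge k k₀ with hlt | hge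
      · rw [hf k (Finset.mem_Icc.mpr hk) hlt, pow_zero, coeff_one, if_neg hp0.ne']
      · rw [coeff_pow_one_add (G k) k p (f k) hp0 (by omega) (hGc k hk.1 hk.2)
          (hGv k hk.2), hGv k hk.2 p hp0 (by omega), mul_zero]
    rw [coeff_prod_one_add _ k₀ k₀ (by omega) le_rfl _ h0' hv']
    rw [Finset.sum_eq_single k₀]
    · rw [coeff_pow_one_add (G k₀) k₀ k₀ (f k₀) (by omega) le_rfl (hGc k₀ hk₀1 hk₀m)
        (hGv k₀ hk₀m), hc]
    · intro k hk hne
      rw [Finset.mem_Icc] at hk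
      rcases lt_or_ge k k₀ with hlt | hge
      · rw [hf k (Finset.mem_Icc.mpr hk) hlt, pow_zero, coeff_one, if_neg (by omega)]
      · have hgt : k₀ < k := by omega
        rw [coeff_pow_one_add (G k) k k₀ (f k) (by omega) (by omega) (hGc k hk.1 hk.2)
          (hGv k hk.2), hGv k hk.2 k₀ (by omega) hgt, mul_zero]
    · intro hk
      exact absurd (Finset.mem_Icc.mpr ⟨hk₀1, hk₀m⟩) hk
  have ha0 : ∀ k ∈ Icc 1 m, k < k₀ → a k = 0 := by
    intro k hk hlt; rw [ha]; simp only; rw [hk₀min k hk hlt]; rfl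
  have hb0 : ∀ k ∈ Icc 1 m, k < k₀ → b k = 0 := by
    intro k hk hlt; rw [hb]; simp only; rw [hk₀min k hk hlt]; rfl
  have final : (a k₀ : ℚ) * c = (b k₀ : ℚ) * c := by
    rw [← coeffcomp a ha0, ← coeffcomp b hb0, hprod]
  have : (a k₀ : ℚ) = (b k₀ : ℚ) := mul_right_cancel₀ hcne final
  have : a k₀ = b k₀ := Nat.cast_injective this
  apply hek₀
  rw [hab k₀, this, sub_self]
end

section
/- Let G be the subgroup of the multiplicative group ℚ(B,C)* generated modulo ℚ* by F₂ = B⁴/D, F₃ = B, and F₄,…,Fₙ (n ≥ 3), and H the subgroup generated modulo ℚ* by B, D, P₄,…,Pₙ, where each Fₖ (k ≥ 4) is obtained from Pₖ by removing all irreducible factors in common with D and with P_d for d < k. Assuming each Fₖ (k ≥ 4) is irreducible in ℚ[B,C], we have G = H. -/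
open MvPolynomial Polynomial

/-- The polynomial ring `ℚ[B,C]`, with `B = X 0` and `C = X 1`. -/
noncomputable abbrev RBC := MvPolynomial (Fin 2) ℚ

/-- The field `ℚ(B,C)` of rational functions. -/
noncomputable abbrev KBC := FractionRing RBC

noncomputable def Bp : RBC := MvPolynomial.X 0
noncomputable def Cp : RBC := MvPolynomial.X 1

/-- The discriminant `D = B³·(C⁴ − 8BC² − 3C³ + 16B² − 20BC + 3C² + B − C)`. -/
noncomputable def Dp : RBC :=
  Bp ^ 3 * (Cp ^ 4 - 8 * Bp * Cp ^ 2 - 3 * Cp ^ 3 + 16 * Bp ^ 2 - 20 * Bp * Cp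
    + 3 * Cp ^ 2 + Bp - Cp)

/-- The Tate normal form curve `Y² + (1−C)XY − BY = X³ − BX²` over `ℚ[B,C]`. -/
noncomputable def tateCurvePoly : WeierstrassCurve RBC :=
  { a₁ := 1 - Cp, a₂ := -Bp, a₃ := -Bp, a₄ := 0, a₆ := 0 }

/-- `Pₙ ∈ ℚ[B,C]`: the `n`-division polynomial of the Tate normal form evaluated at
the point `(0,0)`. -/
noncomputable def Pdiv (n : ℕ) : RBC :=
  Polynomial.eval (0 : RBC)
    (Polynomial.eval (0 : Polynomial RBC) (tateCurvePoly.ψ (n : ℤ)))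

/-- The subgroup of `ℚ(B,C)*` of nonzero rational constants. -/
def ratConsts : Set KBCˣ := {u : KBCˣ | ∃ q : ℚ, (u : KBC) = (q : KBC)}

/-! ### Auxiliary material -/

noncomputable def Ep : RBC :=
  Cp ^ 4 - 8 * Bp * Cp ^ 2 - 3 * Cp ^ 3 + 16 * Bp ^ 2 - 20 * Bp * Cp + 3 * Cp ^ 2 + Bp - Cp

lemma Dp_eq : Dp = Bp ^ 3 * Ep := rfl

lemma Pdiv_one : Pdiv 1 = 1 := by
  simp [Pdiv, WeierstrassCurve.ψ_one]

lemma Pdiv_two : Pdiv 2 = -Bp := by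
  show Polynomial.eval _ (Polynomial.eval _ (tateCurvePoly.ψ (2:ℤ))) = -Bp
  rw [WeierstrassCurve.ψ_two]
  simp [WeierstrassCurve.ψ₂, WeierstrassCurve.Affine.polynomialY, tateCurvePoly]

lemma Pdiv_three : Pdiv 3 = -Bp^3 := by
  show Polynomial.eval _ (Polynomial.eval _ (tateCurvePoly.ψ (3:ℤ))) = -Bp^3
  rw [WeierstrassCurve.ψ_three]
  simp [WeierstrassCurve.Ψ₃, WeierstrassCurve.b₂, WeierstrassCurve.b₄, WeierstrassCurve.b₆,
    WeierstrassCurve.b₈, tateCurvePoly]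
  ring

/-- `ℚ[B,C] ≃ (ℚ[Y])[X]` with `B ↦ X`, `C ↦ C Y`. -/
noncomputable def Φ : RBC ≃ₐ[ℚ] Polynomial (Polynomial ℚ) :=
  (MvPolynomial.finSuccEquiv ℚ 1).trans <| Polynomial.mapAlgEquiv <|
    (MvPolynomial.finSuccEquiv ℚ 0).trans <| Polynomial.mapAlgEquiv <|
      MvPolynomial.isEmptyAlgEquiv ℚ (Fin 0)

lemma Φ_B : Φ Bp = Polynomial.X := by
  simp [Φ, Bp, MvPolynomial.finSuccEquiv_X_zero]

lemma Φ_C : Φ Cp = Polynomial.C Polynomial.X := by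
  have h1 : (MvPolynomial.X 1 : RBC) = MvPolynomial.X (Fin.succ 0) := rfl
  simp [Φ, Cp, h1, MvPolynomial.finSuccEquiv_X_succ, MvPolynomial.finSuccEquiv_X_zero]

noncomputable def b₁ : Polynomial ℚ := 1 - 20 * Polynomial.X - 8 * Polynomial.X ^ 2
noncomputable def c₁ : Polynomial ℚ :=
  Polynomial.X ^ 4 - 3 * Polynomial.X ^ 3 + 3 * Polynomial.X ^ 2 - Polynomial.X

lemma Φ_Ep : Φ Ep = Polynomial.C 16 * Polynomial.X ^ 2 + Polynomial.C b₁ * Polynomial.X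
    + Polynomial.C c₁ := by
  simp only [Ep, map_add, map_sub, map_mul, map_pow, map_ofNat, Φ_B, Φ_C, b₁, c₁]
  ring_nf
  simp

abbrev KQ := FractionRing (Polynomial ℚ)
noncomputable abbrev φA : Polynomial ℚ →+* KQ := algebraMap (Polynomial ℚ) KQ

lemma rootMult_t : Polynomial.rootMultiplicity (-1/8 : ℚ) (8 * Polynomial.X + 1) = 1 := by
  have h : (8 * Polynomial.X + 1 : Polynomial ℚ)
      = Polynomial.C 8 * (Polynomial.X - Polynomial.C (-1/8)) := by
    rw [mul_sub, ← Polynomial.C_mul]; norm_num [map_ofNat]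
  rw [h, Polynomial.rootMultiplicity_mul (by
    intro hc
    apply_fun Polynomial.eval (0:ℚ) at hc
    simp at hc), Polynomial.rootMultiplicity_eq_zero (by simp [Polynomial.IsRoot]),
    Polynomial.rootMultiplicity_X_sub_C_self]

lemma not_sq (s : KQ) : φA ((8 * Polynomial.X + 1) ^ 3) ≠ s * s := by
  intro h
  obtain ⟨a, b, hb', rfl⟩ := IsFractionRing.div_surjective (A := Polynomial ℚ) s
  have hb : b ≠ 0 := nonZeroDivisors.ne_zero hb'
  set t : Polynomial ℚ := 8 * Polynomial.X + 1 with ht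
  have ht0 : t ≠ 0 := by
    intro hc; apply_fun Polynomial.eval (0:ℚ) at hc; simp [ht] at hc
  have hbK : φA b ≠ 0 := by
    simpa using fun hc => hb (IsFractionRing.injective (Polynomial ℚ) KQ (by simpa using hc))
  have key : t ^ 3 * (b * b) = a * a := by
    apply IsFractionRing.injective (Polynomial ℚ) KQ
    rw [map_mul, h, map_mul, map_mul, div_mul_div_comm]
    exact div_mul_cancel₀ _ (mul_ne_zero hbK hbK)
  have ha0 : a ≠ 0 := by
    intro hc; rw [hc, mul_zero] at key
    exact (mul_ne_zero (pow_ne_zero _ ht0) (mul_ne_zero hb hb)) key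
  have hmul : ∀ p q : Polynomial ℚ, p ≠ 0 → q ≠ 0 →
      Polynomial.rootMultiplicity (-1/8 : ℚ) (p * q)
        = Polynomial.rootMultiplicity (-1/8 : ℚ) p + Polynomial.rootMultiplicity (-1/8 : ℚ) q :=
    fun p q hp hq => Polynomial.rootMultiplicity_mul (mul_ne_zero hp hq)
  have e1 : Polynomial.rootMultiplicity (-1/8 : ℚ) (t ^ 3 * (b * b))
      = 3 + 2 * Polynomial.rootMultiplicity (-1/8 : ℚ) b := by
    rw [hmul _ _ (pow_ne_zero _ ht0) (mul_ne_zero hb hb), hmul _ _ hb hb]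
    have : t ^ 3 = t * (t * t) := by ring
    rw [this, hmul _ _ ht0 (mul_ne_zero ht0 ht0), hmul _ _ ht0 ht0, rootMult_t]
    ring
  have e2 : Polynomial.rootMultiplicity (-1/8 : ℚ) (a * a)
      = 2 * Polynomial.rootMultiplicity (-1/8 : ℚ) a := by
    rw [hmul _ _ ha0 ha0]; ring
  rw [key, e2] at e1
  omega

noncomputable def mq : Polynomial (Polynomial ℚ) :=
  Polynomial.X ^ 2 + (Polynomial.C (Polynomial.C (16⁻¹:ℚ) * b₁) * Polynomial.X
    + Polynomial.C (Polynomial.C (16⁻¹:ℚ) * c₁))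

lemma monic_mq : mq.Monic := by
  apply Polynomial.monic_X_pow_add
  have h : Polynomial.degree (Polynomial.C (Polynomial.C (16⁻¹:ℚ) * b₁) * Polynomial.X
      + Polynomial.C (Polynomial.C (16⁻¹:ℚ) * c₁)) ≤ 1 := by compute_degree
  exact lt_of_le_of_lt h (by decide)

lemma natDegree_mq : mq.natDegree = 2 := by
  unfold mq; compute_degree!

lemma irr_mq_map : Irreducible (mq.map φA) := by
  have hnd : (mq.map φA).natDegree = 2 := by rw [(monic_mq).natDegree_map, natDegree_mq]
  rw [Polynomial.irreducible_iff_roots_eq_zero_of_degree_le_three (by simp [hnd])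
    (by simp [hnd])]
  apply Multiset.eq_zero_of_forall_notMem
  intro x hx
  rw [Polynomial.mem_roots'] at hx
  have hev := hx.2
  rw [Polynomial.IsRoot, Polynomial.eval_map, mq] at hev
  simp only [Polynomial.eval₂_add, Polynomial.eval₂_mul, Polynomial.eval₂_pow,
    Polynomial.eval₂_X, Polynomial.eval₂_C, map_mul] at hev
  have h16 : φA (Polynomial.C (16⁻¹:ℚ)) * 16 = 1 := by
    have h1 : (Polynomial.C (16⁻¹:ℚ)) * 16 = 1 := by
      rw [show (16 : Polynomial ℚ) = Polynomial.C (16:ℚ) from (map_ofNat _ _).symm,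
        ← Polynomial.C_mul]
      norm_num
    rw [show (16:KQ) = φA 16 from (map_ofNat _ _).symm, ← map_mul, h1, map_one]
  have key : (16:KQ) * (x * x) + φA b₁ * x + φA c₁ = 0 := by
    linear_combination (16:KQ) * hev - (φA b₁ * x + φA c₁) * h16
  have hdisc : ∀ s : KQ, discrim (16:KQ) (φA b₁) (φA c₁) ≠ s ^ 2 := by
    intro s
    have hb : (b₁ ^ 2 - 64 * c₁ : Polynomial ℚ) = (8 * Polynomial.X + 1) ^ 3 := by
      rw [b₁, c₁]; ring
    have hd : discrim (16:KQ) (φA b₁) (φA c₁) = φA ((8 * Polynomial.X + 1) ^ 3) := by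
      rw [discrim, ← hb]
      push_cast [map_sub, map_pow, map_mul, map_ofNat]
      ring
    rw [hd]
    exact fun hc => not_sq s (by rw [hc]; ring)
  exact quadratic_ne_zero_of_discrim_ne_sq hdisc x key

lemma irr_Ep : Irreducible Ep := by
  have irr_mq : Irreducible mq :=
    ((monic_mq).irreducible_iff_irreducible_map_fraction_map (K := KQ)).mpr irr_mq_map
  have hu : IsUnit (Polynomial.C (Polynomial.C (16:ℚ)) : Polynomial (Polynomial ℚ)) :=
    Polynomial.isUnit_C.mpr (Polynomial.isUnit_C.mpr (isUnit_iff_ne_zero.mpr (by norm_num)))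
  have e1 : Polynomial.C (16:ℚ) * (Polynomial.C (16⁻¹:ℚ) * b₁) = b₁ := by
    rw [← mul_assoc, ← Polynomial.C_mul]; norm_num
  have e2 : Polynomial.C (16:ℚ) * (Polynomial.C (16⁻¹:ℚ) * c₁) = c₁ := by
    rw [← mul_assoc, ← Polynomial.C_mul]; norm_num
  have hassoc : Associated mq (Φ Ep) := by
    refine ⟨hu.unit, ?_⟩
    rw [IsUnit.unit_spec, Φ_Ep, mq]
    rw [show (16 : Polynomial ℚ) = Polynomial.C (16:ℚ) from (map_ofNat _ _).symm]
    calc (Polynomial.X ^ 2 + (Polynomial.C (Polynomial.C (16⁻¹:ℚ) * b₁) * Polynomial.X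
          + Polynomial.C (Polynomial.C (16⁻¹:ℚ) * c₁))) * Polynomial.C (Polynomial.C (16:ℚ))
        = Polynomial.C (Polynomial.C (16:ℚ)) * Polynomial.X ^ 2
          + Polynomial.C (Polynomial.C (16:ℚ) * (Polynomial.C (16⁻¹:ℚ) * b₁)) * Polynomial.X
          + Polynomial.C (Polynomial.C (16:ℚ) * (Polynomial.C (16⁻¹:ℚ) * c₁)) := by
          simp only [Polynomial.C_mul]; ring
      _ = _ := by rw [e1, e2]
  exact (MulEquiv.irreducible_iff (Φ : RBC ≃* Polynomial (Polynomial ℚ))).mp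
    (hassoc.irreducible irr_mq)

lemma prime_Bp : Prime Bp := by
  have : Prime (Φ Bp) := by rw [Φ_B]; exact Polynomial.prime_X
  exact (MulEquiv.prime_iff Φ).mp this

lemma irr_Bp : Irreducible Bp := prime_Bp.irreducible

lemma Bp_ne_zero : Bp ≠ 0 := irr_Bp.ne_zero
lemma Ep_ne_zero : Ep ≠ 0 := irr_Ep.ne_zero
lemma Dp_ne_zero : Dp ≠ 0 := by
  rw [Dp_eq]; exact mul_ne_zero (pow_ne_zero _ Bp_ne_zero) Ep_ne_zero

lemma isUnit_RBC {p : RBC} (h : IsUnit p) : ∃ c : ℚ, c ≠ 0 ∧ p = MvPolynomial.C c := by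
  have h2 : IsUnit (Φ p) := h.map Φ
  rw [Polynomial.isUnit_iff] at h2
  obtain ⟨r, hr, hrp⟩ := h2
  rw [Polynomial.isUnit_iff] at hr
  obtain ⟨c, hc, hcr⟩ := hr
  have hΦC : Φ (MvPolynomial.C c) = Polynomial.C (Polynomial.C c) := by
    have : (MvPolynomial.C c : RBC) = algebraMap ℚ RBC c := rfl
    rw [this, AlgEquiv.commutes]
    simp [Polynomial.algebraMap_apply, MvPolynomial.algebraMap_eq]
  refine ⟨c, ?_, ?_⟩
  · intro hc0
    rw [hc0] at hc
    exact (by simpa using hc : IsUnit (0:ℚ)).ne_zero rfl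
  · apply Φ.injective
    rw [hΦC, ← hrp, ← hcr]
noncomputable abbrev φK : RBC →+* KBC := algebraMap RBC KBC

lemma φK_inj : Function.Injective φK := IsFractionRing.injective RBC KBC
lemma φK_ne_zero {p : RBC} (hp : p ≠ 0) : φK p ≠ 0 :=
  fun h => hp (φK_inj (by simpa using h))
lemma isUnit_φK {p : RBC} (hp : p ≠ 0) : IsUnit (φK p) := isUnit_iff_ne_zero.mpr (φK_ne_zero hp)

/-- `p` is represented by a unit lying in `H`. -/
def M (H : Subgroup KBCˣ) (p : RBC) : Prop := ∃ u : KBCˣ, (u : KBC) = φK p ∧ u ∈ H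

lemma M.ne_zero' {H : Subgroup KBCˣ} {p : RBC} (h : M H p) : p ≠ 0 := by
  obtain ⟨u, hu, -⟩ := h
  intro hp
  exact u.ne_zero (by rw [hu, hp, map_zero])

lemma M.mem {H : Subgroup KBCˣ} {p : RBC} (h : M H p) {u : KBCˣ} (hu : (u : KBC) = φK p) :
    u ∈ H := by
  obtain ⟨v, hv, hvH⟩ := h
  have : u = v := Units.ext (hu.trans hv.symm)
  rw [this]; exact hvH

lemma M.mul {H : Subgroup KBCˣ} {p q : RBC} (hp : M H p) (hq : M H q) : M H (p * q) := by
  obtain ⟨u, hu, huH⟩ := hp; obtain ⟨v, hv, hvH⟩ := hq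
  exact ⟨u * v, by rw [Units.val_mul, hu, hv, map_mul], mul_mem huH hvH⟩

lemma M.one {H : Subgroup KBCˣ} : M H 1 := ⟨1, by simp, one_mem H⟩

lemma M.pow {H : Subgroup KBCˣ} {p : RBC} (hp : M H p) (n : ℕ) : M H (p ^ n) := by
  induction n with
  | zero => simpa using M.one
  | succ n ih => rw [pow_succ]; exact ih.mul hp

lemma M.of_mul_right {H : Subgroup KBCˣ} {p q r : RBC} (h : p * q = r) (hq : M H q)
    (hr : M H r) : M H p := by
  obtain ⟨v, hv, hvH⟩ := hq; obtain ⟨w, hw, hwH⟩ := hr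
  refine ⟨w * v⁻¹, ?_, mul_mem hwH (inv_mem hvH)⟩
  rw [Units.val_mul, hw, ← h, map_mul, Units.val_inv_eq_inv_val, hv]
  field_simp
  rw [mul_div_assoc, div_self (by rw [← hv]; exact v.ne_zero), mul_one]

lemma ratCast_φK (c : ℚ) : φK (MvPolynomial.C c) = (c : KBC) := by
  have := eq_ratCast (φK.comp (MvPolynomial.C : ℚ →+* RBC)) c
  rwa [RingHom.comp_apply] at this

lemma M_const {S : Set KBCˣ} (hRat : ratConsts ⊆ S) {c : ℚ} (hc : c ≠ 0) :
    M (Subgroup.closure S) (MvPolynomial.C c) := by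
  have hnz : (MvPolynomial.C c : RBC) ≠ 0 := by
    simpa using hc
  refine ⟨(isUnit_φK hnz).unit, (isUnit_φK hnz).unit_spec, Subgroup.subset_closure (hRat ?_)⟩
  exact ⟨c, (isUnit_φK hnz).unit_spec.trans (ratCast_φK c)⟩

lemma M_assoc {S : Set KBCˣ} (hRat : ratConsts ⊆ S) {p q : RBC}
    (h : Associated p q) (hp : M (Subgroup.closure S) p) : M (Subgroup.closure S) q := by
  obtain ⟨u, hu⟩ := h
  obtain ⟨c, hc, hcu⟩ := isUnit_RBC u.isUnit
  rw [← hu, hcu]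
  exact hp.mul (M_const hRat hc)

lemma M_of_factors {S : Set KBCˣ} (hRat : ratConsts ⊆ S) {p : RBC} (hp : p ≠ 0)
    (h : ∀ q : RBC, Prime q → q ∣ p → M (Subgroup.closure S) q) :
    M (Subgroup.closure S) p := by
  induction p using UniqueFactorizationMonoid.induction_on_prime with
  | h₁ => exact absurd rfl hp
  | h₂ x hx =>
    obtain ⟨c, hc, rfl⟩ := isUnit_RBC hx
    exact M_const hRat hc
  | h₃ a q ha hq ih =>
    exact (h q hq (dvd_mul_right q a)).mul
      (ih (right_ne_zero_of_mul hp) (fun r hr hra => h r hr (hra.mul_left q)))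

lemma M_of_dvd_D {S : Set KBCˣ} (hRat : ratConsts ⊆ S)
    (hB : M (Subgroup.closure S) Bp) (hE : M (Subgroup.closure S) Ep)
    {q : RBC} (hq : Prime q) (hqd : q ∣ Dp) : M (Subgroup.closure S) q := by
  rw [Dp_eq] at hqd
  rcases hq.dvd_or_dvd hqd with h | h
  · exact M_assoc hRat (hq.irreducible.associated_of_dvd irr_Bp (hq.dvd_of_dvd_pow h)).symm hB
  · exact M_assoc hRat (hq.irreducible.associated_of_dvd irr_Ep h).symm hE

/-- The structural hypothesis on `F`. -/
def bigHyp (n : ℕ) (F : ℕ → RBC) : Prop := ∀ k, 4 ≤ k → k ≤ n →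
  Irreducible (F k) ∧
  (∃ G : RBC, Pdiv k = F k * G ∧
    ∀ q : RBC, Irreducible q → q ∣ G →
      q ∣ Dp ∨ ∃ d, 1 ≤ d ∧ d < k ∧ q ∣ Pdiv d) ∧
  (∀ q : RBC, Irreducible q → q ∣ F k →
    ¬q ∣ Dp ∧ ∀ d, 1 ≤ d → d < k → ¬q ∣ Pdiv d)

lemma Pdiv_nz (n : ℕ) (F : ℕ → RBC) (hFk : bigHyp n F) :
    ∀ d, 1 ≤ d → d ≤ n → Pdiv d ≠ 0 := by
  intro d h1 hn
  rcases d with _|_|_|_|d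
  · omega
  · rw [Pdiv_one]; exact one_ne_zero
  · rw [Pdiv_two]; simpa using Bp_ne_zero
  · rw [Pdiv_three]; simpa using (pow_ne_zero 3 Bp_ne_zero)
  · obtain ⟨irrF, ⟨G, hPG, hGfac⟩, hFnew⟩ := hFk (d+4) (by omega) hn
    intro h0
    rw [h0] at hPG
    have hG0 : G = 0 := by
      rcases mul_eq_zero.mp hPG.symm with h | h
      · exact absurd h irrF.ne_zero
      · exact h
    obtain ⟨hD, hP⟩ := hFnew (F (d+4)) irrF dvd_rfl
    rcases hGfac (F (d+4)) irrF (hG0 ▸ dvd_zero _) with h | ⟨d', h1', hlt', hdvd'⟩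
    · exact hD h
    · exact hP d' h1' hlt' hdvd'

lemma claim (n : ℕ) (F : ℕ → RBC) (hFk : bigHyp n F) {S : Set KBCˣ} (hRat : ratConsts ⊆ S)
    (hB : M (Subgroup.closure S) Bp) (hE : M (Subgroup.closure S) Ep)
    (hGen : ∀ k, 4 ≤ k → k ≤ n →
      M (Subgroup.closure S) (F k) ∨ M (Subgroup.closure S) (Pdiv k)) :
    ∀ d, d ≤ n → ((1 ≤ d → ∀ q : RBC, Prime q → q ∣ Pdiv d → M (Subgroup.closure S) q)
      ∧ (4 ≤ d → M (Subgroup.closure S) (F d) ∧ M (Subgroup.closure S) (Pdiv d))) := by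
  intro d
  induction d using Nat.strong_induction_on with
  | _ d IH =>
  intro hdn
  by_cases h4 : 4 ≤ d
  case neg =>
    refine ⟨?_, fun h => absurd h h4⟩
    intro h1 q hq hdvd
    have h3 : d ≤ 3 := by omega
    interval_cases d
    · rw [Pdiv_one] at hdvd
      exact absurd (isUnit_of_dvd_one hdvd) hq.not_unit
    · rw [Pdiv_two, dvd_neg] at hdvd
      exact M_assoc hRat (hq.irreducible.associated_of_dvd irr_Bp hdvd).symm hB
    · rw [Pdiv_three, dvd_neg] at hdvd
      exact M_assoc hRat
        (hq.irreducible.associated_of_dvd irr_Bp (hq.dvd_of_dvd_pow hdvd)).symm hB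
  case pos =>
    obtain ⟨irrF, ⟨G, hPG, hGfac⟩, hFnew⟩ := hFk d h4 hdn
    have hPnz : Pdiv d ≠ 0 := Pdiv_nz n F hFk d (by omega) hdn
    have hGnz : G ≠ 0 := right_ne_zero_of_mul (hPG ▸ hPnz)
    have hMG : M (Subgroup.closure S) G := by
      apply M_of_factors hRat hGnz
      intro q hq hqG
      rcases hGfac q hq.irreducible hqG with h | ⟨d', h1', hlt', hdvd'⟩
      · exact M_of_dvd_D hRat hB hE hq h
      · exact (IH d' (by omega) (by omega)).1 h1' q hq hdvd'
    have part2 : M (Subgroup.closure S) (F d) ∧ M (Subgroup.closure S) (Pdiv d) := by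
      rcases hGen d h4 hdn with hF | hP
      · exact ⟨hF, hPG ▸ hF.mul hMG⟩
      · exact ⟨M.of_mul_right hPG.symm hMG hP, hP⟩
    refine ⟨?_, fun _ => part2⟩
    intro _ q hq hdvd
    rw [hPG] at hdvd
    rcases hq.dvd_or_dvd hdvd with h | h
    · exact M_assoc hRat (hq.irreducible.associated_of_dvd irrF h).symm part2.1
    · rcases hGfac q hq.irreducible h with h' | ⟨d', h1', hlt', hdvd'⟩
      · exact M_of_dvd_D hRat hB hE hq h'
      · exact (IH d' (by omega) (by omega)).1 h1' q hq hdvd'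

/-- Lemma `lem:equivalent`: modulo `ℚ*`, the subgroup of `ℚ(B,C)*` generated by
`F₂ = B⁴/D`, `F₃ = B` and `F₄, …, Fₙ` equals the subgroup generated by
`B`, `D`, `P₄, …, Pₙ`, where each `Fₖ` (`k ≥ 4`) is irreducible and is obtained from
`Pₖ` by removing all irreducible factors in common with `D` and with `P_d`, `d < k`. -/
theorem subgroup_F_eq_subgroup_P (n : ℕ) (hn : 3 ≤ n) (F : ℕ → RBC)
    (hF3 : F 3 = Bp)
    (hFk : ∀ k, 4 ≤ k → k ≤ n →
      Irreducible (F k) ∧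
      (∃ G : RBC, Pdiv k = F k * G ∧
        ∀ q : RBC, Irreducible q → q ∣ G →
          q ∣ Dp ∨ ∃ d, 1 ≤ d ∧ d < k ∧ q ∣ Pdiv d) ∧
      (∀ q : RBC, Irreducible q → q ∣ F k →
        ¬q ∣ Dp ∧ ∀ d, 1 ≤ d → d < k → ¬q ∣ Pdiv d)) :
    Subgroup.closure (ratConsts ∪
        {u : KBCˣ | (u : KBC) * algebraMap RBC KBC Dp = algebraMap RBC KBC Bp ^ 4 ∨
          (u : KBC) = algebraMap RBC KBC (F 3) ∨
          ∃ k, 4 ≤ k ∧ k ≤ n ∧ (u : KBC) = algebraMap RBC KBC (F k)}) =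
      Subgroup.closure (ratConsts ∪
        {u : KBCˣ | (u : KBC) = algebraMap RBC KBC Bp ∨
          (u : KBC) = algebraMap RBC KBC Dp ∨
          ∃ k, 4 ≤ k ∧ k ≤ n ∧ (u : KBC) = algebraMap RBC KBC (Pdiv k)}) := by
  have hbig : bigHyp n F := hFk
  set S₁ : Set KBCˣ := ratConsts ∪
      {u : KBCˣ | (u : KBC) * algebraMap RBC KBC Dp = algebraMap RBC KBC Bp ^ 4 ∨
        (u : KBC) = algebraMap RBC KBC (F 3) ∨
        ∃ k, 4 ≤ k ∧ k ≤ n ∧ (u : KBC) = algebraMap RBC KBC (F k)} with hS₁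
  set S₂ : Set KBCˣ := ratConsts ∪
      {u : KBCˣ | (u : KBC) = algebraMap RBC KBC Bp ∨
        (u : KBC) = algebraMap RBC KBC Dp ∨
        ∃ k, 4 ≤ k ∧ k ≤ n ∧ (u : KBC) = algebraMap RBC KBC (Pdiv k)} with hS₂
  have hRat₁ : ratConsts ⊆ S₁ := Set.subset_union_left
  have hRat₂ : ratConsts ⊆ S₂ := Set.subset_union_left
  -- units representing B and D
  set uB : KBCˣ := (isUnit_φK Bp_ne_zero).unit with huB
  set uD : KBCˣ := (isUnit_φK Dp_ne_zero).unit with huD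
  have hvB : (uB : KBC) = φK Bp := (isUnit_φK Bp_ne_zero).unit_spec
  have hvD : (uD : KBC) = φK Dp := (isUnit_φK Dp_ne_zero).unit_spec
  -- basic memberships for S₂
  have hB₂ : M (Subgroup.closure S₂) Bp :=
    ⟨uB, hvB, Subgroup.subset_closure (Set.mem_union_right _ (Or.inl hvB))⟩
  have hD₂ : M (Subgroup.closure S₂) Dp :=
    ⟨uD, hvD, Subgroup.subset_closure (Set.mem_union_right _ (Or.inr (Or.inl hvD)))⟩
  have hEmul : Ep * Bp ^ 3 = Dp := by rw [Dp_eq]; ring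
  have hE₂ : M (Subgroup.closure S₂) Ep := M.of_mul_right hEmul (hB₂.pow 3) hD₂
  have hGen₂ : ∀ k, 4 ≤ k → k ≤ n →
      M (Subgroup.closure S₂) (F k) ∨ M (Subgroup.closure S₂) (Pdiv k) := by
    intro k h4 hk
    have hnz := Pdiv_nz n F hbig k (by omega) hk
    exact Or.inr ⟨(isUnit_φK hnz).unit, (isUnit_φK hnz).unit_spec,
      Subgroup.subset_closure (Set.mem_union_right _
        (Or.inr (Or.inr ⟨k, h4, hk, (isUnit_φK hnz).unit_spec⟩)))⟩
  -- basic memberships for S₁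
  have hmemB₁S : uB ∈ S₁ := Set.mem_union_right _
    (Or.inr (Or.inl (show (uB : KBC) = algebraMap RBC KBC (F 3) by rw [hF3]; exact hvB)))
  have hB₁ : M (Subgroup.closure S₁) Bp := ⟨uB, hvB, Subgroup.subset_closure hmemB₁S⟩
  set w : KBCˣ := uB ^ 4 * uD⁻¹ with hw
  have hvw : (w : KBC) = φK Bp ^ 4 * (φK Dp)⁻¹ := by
    rw [hw, Units.val_mul, Units.val_pow_eq_pow_val, Units.val_inv_eq_inv_val, hvB, hvD]
  have hwS₁ : w ∈ S₁ := by
    refine Set.mem_union_right _ (Or.inl ?_)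
    rw [hvw, inv_mul_cancel_right₀ (φK_ne_zero Dp_ne_zero)]
  have hD₁ : M (Subgroup.closure S₁) Dp := by
    refine ⟨uD, hvD, ?_⟩
    have huDw : uD = uB ^ 4 * w⁻¹ := by
      rw [hw, mul_inv_rev, inv_inv, mul_comm uD, mul_inv_cancel_left]
    rw [huDw]
    exact mul_mem (pow_mem (Subgroup.subset_closure hmemB₁S) 4)
      (inv_mem (Subgroup.subset_closure hwS₁))
  have hE₁ : M (Subgroup.closure S₁) Ep := M.of_mul_right hEmul (hB₁.pow 3) hD₁
  have hGen₁ : ∀ k, 4 ≤ k → k ≤ n →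
      M (Subgroup.closure S₁) (F k) ∨ M (Subgroup.closure S₁) (Pdiv k) := by
    intro k h4 hk
    have hnz : F k ≠ 0 := ((hFk k h4 hk).1).ne_zero
    exact Or.inl ⟨(isUnit_φK hnz).unit, (isUnit_φK hnz).unit_spec,
      Subgroup.subset_closure (Set.mem_union_right _
        (Or.inr (Or.inr ⟨k, h4, hk, (isUnit_φK hnz).unit_spec⟩)))⟩
  apply le_antisymm
  · rw [Subgroup.closure_le]
    intro u hu
    rw [Set.mem_union] at hu
    rcases hu with hc | hu
    · exact Subgroup.subset_closure (Set.mem_union_left _ hc)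
    · rcases hu with h | h | ⟨k, h4, hk, hval⟩
      · obtain ⟨uB', hvB', hmB'⟩ := hB₂
        obtain ⟨uD', hvD', hmD'⟩ := hD₂
        have hueq : u = uB' ^ 4 * uD'⁻¹ := by
          apply Units.ext
          rw [Units.val_mul, Units.val_pow_eq_pow_val, Units.val_inv_eq_inv_val, hvB', hvD']
          rw [eq_mul_inv_iff_mul_eq₀ (φK_ne_zero Dp_ne_zero)]
          exact h
        rw [hueq]
        exact mul_mem (pow_mem hmB' 4) (inv_mem hmD')
      · rw [hF3] at h
        exact hB₂.mem h
      · exact (((claim n F hbig hRat₂ hB₂ hE₂ hGen₂ k hk).2 h4).1).mem hval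
  · rw [Subgroup.closure_le]
    intro u hu
    rw [Set.mem_union] at hu
    rcases hu with hc | hu
    · exact Subgroup.subset_closure (Set.mem_union_left _ hc)
    · rcases hu with h | h | ⟨k, h4, hk, hval⟩
      · exact hB₁.mem h
      · exact hD₁.mem h
      · exact (((claim n F hbig hRat₁ hB₁ hE₁ hGen₁ k hk).2 h4).2).mem hval
end
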